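/- Let Q : ℝ → Matrix (Fin 3) (Fin 3) ℝ be differentiable with Q(t)ᵀ Q(t) = 1 and det Q(t) = 1 for all t, let e : ℝ → ℝ³ be differentiable, let ω̄ : ℝ → ℝ³, and let q̇ : ℝ → ℝ³ satisfy (1/2) q̇(t) × u = Q̇(t) Q(t)ᵀ u for all u ∈ ℝ³ and all t. Set ẽ(t) := Q(t)ᵀ e(t) and ω̃̄(t) := Q(t)ᵀ(ω̄(t) − q̇(t)). Then for t₀ < t_N, the averaged rotation speed is frame-invariant: (1/(t_N − t₀)) ∫_{t₀}^{t_N} ‖d/dt ẽ(t) − (1/2) ω̃̄(t) × ẽ(t)‖ dt = (1/(t_N − t₀)) ∫_{t₀}^{t_N} ‖d/dt e(t) − (1/2) ω̄(t) × e(t)‖ dt. -/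

import Mathlib

open Matrix

/-- Entrywise time derivative of a time-dependent matrix. -/
noncomputable def matDeriv (Q : ℝ → Matrix (Fin 3) (Fin 3) ℝ) (t : ℝ) :
    Matrix (Fin 3) (Fin 3) ℝ :=
  Matrix.of fun i j => deriv (fun s => Q s i j) t

/-- The cross product on Euclidean 3-space. -/
noncomputable def cross3 (a b : EuclideanSpace ℝ (Fin 3)) : EuclideanSpace ℝ (Fin 3) :=
  (EuclideanSpace.equiv (Fin 3) ℝ).symm
    (crossProduct ((EuclideanSpace.equiv (Fin 3) ℝ) a) ((EuclideanSpace.equiv (Fin 3) ℝ) b))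

/-- The averaged rotation speed (time average of the norm of the
relative tangent velocity ė − (1/2) ω̄ × e) is invariant under observer changes
with rotation Q(t) ∈ SO(3). -/
lemma norm_pres (A : Matrix (Fin 3) (Fin 3) ℝ) (h : Aᵀ * A = 1) (x : EuclideanSpace ℝ (Fin 3)) :
    ‖(Matrix.toEuclideanLin A) x‖ = ‖x‖ := by
  have key : ∀ y : EuclideanSpace ℝ (Fin 3), ‖y‖ = Real.sqrt ((y : Fin 3 → ℝ) ⬝ᵥ y) := by
    intro y
    rw [EuclideanSpace.norm_eq]
    congr 1
    simp [dotProduct, Real.norm_eq_abs, sq_abs, sq]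
  rw [key, key]
  congr 1
  show (A *ᵥ (x : Fin 3 → ℝ)) ⬝ᵥ (A *ᵥ x) = _
  rw [Matrix.dotProduct_mulVec, ← Matrix.mulVec_transpose, Matrix.mulVec_mulVec, h,
    Matrix.one_mulVec]

lemma cross_rot (A : Matrix (Fin 3) (Fin 3) ℝ) (h : Aᵀ * A = 1) (hd : A.det = 1) (v w : Fin 3 → ℝ) :
    A *ᵥ (crossProduct v w) = crossProduct (A *ᵥ v) (A *ᵥ w) := by
  have h' : A * Aᵀ = 1 := mul_eq_one_comm.mp h
  have key : ∀ u : Fin 3 → ℝ,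
      u ⬝ᵥ (A *ᵥ (crossProduct v w)) = u ⬝ᵥ (crossProduct (A *ᵥ v) (A *ᵥ w)) := by
    intro u
    rw [triple_product_eq_det, Matrix.dotProduct_mulVec, ← Matrix.mulVec_transpose,
      triple_product_eq_det]
    have hrow : (Matrix.of ![A *ᵥ (Aᵀ *ᵥ u), A *ᵥ v, A *ᵥ w])
        = (Matrix.of ![Aᵀ *ᵥ u, v, w]) * Aᵀ := by
      ext i j
      fin_cases i <;> simp [Matrix.mul_apply, Matrix.mulVec, dotProduct, Fin.sum_univ_three]
        <;> ring
    have hu : A *ᵥ (Aᵀ *ᵥ u) = u := by rw [Matrix.mulVec_mulVec, h', Matrix.one_mulVec]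
    calc Matrix.det ![Aᵀ *ᵥ u, v, w]
        = Matrix.det ((Matrix.of ![Aᵀ *ᵥ u, v, w]) * Aᵀ) := by
          rw [Matrix.det_mul, Matrix.det_transpose, hd, mul_one]; rfl
      _ = Matrix.det ![A *ᵥ (Aᵀ *ᵥ u), A *ᵥ v, A *ᵥ w] := by rw [← hrow]; rfl
      _ = Matrix.det ![u, A *ᵥ v, A *ᵥ w] := by rw [hu]
  funext i
  have := key (Pi.single i 1)
  simpa [dotProduct, Pi.single_apply] using this

lemma matDeriv_skew (Q : ℝ → Matrix (Fin 3) (Fin 3) ℝ)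
    (hQdiff : ∀ i j : Fin 3, Differentiable ℝ (fun t => Q t i j))
    (hQ : ∀ t : ℝ, (Q t)ᵀ * Q t = 1) (t : ℝ) :
    (matDeriv Q t)ᵀ * Q t + (Q t)ᵀ * matDeriv Q t = 0 := by
  ext i j
  have hf : ∀ k : Fin 3, HasDerivAt (fun s => Q s k i * Q s k j)
      (matDeriv Q t k i * Q t k j + Q t k i * matDeriv Q t k j) t :=
    fun k => ((hQdiff k i t).hasDerivAt.mul (hQdiff k j t).hasDerivAt)
  have hsum : HasDerivAt (fun s => ∑ k : Fin 3, Q s k i * Q s k j)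
      (∑ k : Fin 3, (matDeriv Q t k i * Q t k j + Q t k i * matDeriv Q t k j)) t :=
    HasDerivAt.fun_sum (fun k _ => hf k)
  have hconst : (fun s => ∑ k : Fin 3, Q s k i * Q s k j)
      = fun _ => (1 : Matrix (Fin 3) (Fin 3) ℝ) i j := by
    funext s
    have := hQ s
    calc ∑ k : Fin 3, Q s k i * Q s k j = ((Q s)ᵀ * Q s) i j := by
          simp [Matrix.mul_apply, Matrix.transpose_apply]
      _ = (1 : Matrix (Fin 3) (Fin 3) ℝ) i j := by rw [this]
  have hzero : (∑ k : Fin 3, (matDeriv Q t k i * Q t k j + Q t k i * matDeriv Q t k j)) = 0 := by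
    rw [← hsum.deriv, hconst, deriv_const]
  simp only [Matrix.add_apply, Matrix.mul_apply, Matrix.transpose_apply, Matrix.zero_apply]
  rw [Finset.sum_add_distrib] at hzero
  exact hzero

/-- transport an `EuclideanSpace` vector to a plain function (definitionally the identity) -/
def toFn (x : EuclideanSpace ℝ (Fin 3)) : Fin 3 → ℝ := x

lemma ce (a b : EuclideanSpace ℝ (Fin 3)) (h : (a : Fin 3 → ℝ) = b) : a = b := congrArg (WithLp.toLp 2) h


theorem stmt10
    (Q : ℝ → Matrix (Fin 3) (Fin 3) ℝ)
    (hQdiff : ∀ i j : Fin 3, Differentiable ℝ (fun t => Q t i j))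
    (hQ : ∀ t : ℝ, (Q t)ᵀ * Q t = 1)
    (hdet : ∀ t : ℝ, (Q t).det = 1)
    (e : ℝ → EuclideanSpace ℝ (Fin 3))
    (he : Differentiable ℝ e)
    (ωbar qdot : ℝ → EuclideanSpace ℝ (Fin 3))
    (hqdot : ∀ (t : ℝ) (u : EuclideanSpace ℝ (Fin 3)),
      (1 / 2 : ℝ) • cross3 (qdot t) u
        = Matrix.toEuclideanLin (matDeriv Q t * (Q t)ᵀ) u)
    (et ωt : ℝ → EuclideanSpace ℝ (Fin 3))
    (het : ∀ t : ℝ, et t = Matrix.toEuclideanLin (Q t)ᵀ (e t))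
    (hωt : ∀ t : ℝ, ωt t = Matrix.toEuclideanLin (Q t)ᵀ (ωbar t - qdot t))
    (t₀ tN : ℝ) (ht : t₀ < tN) :
    (1 / (tN - t₀)) *
        ∫ t in t₀..tN, ‖deriv et t - (1 / 2 : ℝ) • cross3 (ωt t) (et t)‖
      = (1 / (tN - t₀)) *
        ∫ t in t₀..tN, ‖deriv e t - (1 / 2 : ℝ) • cross3 (ωbar t) (e t)‖ := by
  -- derivative of et
  have hQQT : ∀ t, Q t * (Q t)ᵀ = 1 := fun t => mul_eq_one_comm.mp (hQ t)
  have hderiv : ∀ t : ℝ, deriv et t =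
      Matrix.toEuclideanLin ((matDeriv Q t)ᵀ) (e t)
        + Matrix.toEuclideanLin ((Q t)ᵀ) (deriv e t) := by
    intro t
    have h1 : HasDerivAt e (deriv e t) t := (he t).hasDerivAt
    have hcomp : ∀ j : Fin 3, HasDerivAt (fun s => (EuclideanSpace.proj (𝕜 := ℝ) j) (e s))
        ((EuclideanSpace.proj (𝕜 := ℝ) j) (deriv e t)) t := fun j =>
      ((EuclideanSpace.proj (𝕜 := ℝ) j).hasFDerivAt).comp_hasDerivAt t h1
    set F : ℝ → (Fin 3 → ℝ) := fun s i => ∑ j : Fin 3, Q s j i * (e s : Fin 3 → ℝ) j with hF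
    have hFd : HasDerivAt F
        (fun i => ∑ j : Fin 3, (matDeriv Q t j i * (e t : Fin 3 → ℝ) j
          + Q t j i * ((deriv e t : EuclideanSpace ℝ (Fin 3))) j)) t := by
      rw [hasDerivAt_pi]
      intro i
      exact HasDerivAt.fun_sum fun j _ =>
        ((hQdiff j i t).hasDerivAt.mul (hcomp j))
    have hetF : et = fun s => (EuclideanSpace.equiv (Fin 3) ℝ).symm (F s) := by
      funext s
      rw [het s]
      apply ce
      funext i
      show ((Q s)ᵀ *ᵥ (e s : Fin 3 → ℝ)) i = _
      simp [Matrix.mulVec, dotProduct, hF, Matrix.transpose_apply]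
    have hetd : HasDerivAt et ((EuclideanSpace.equiv (Fin 3) ℝ).symm
        (fun i => ∑ j : Fin 3, (matDeriv Q t j i * (e t : Fin 3 → ℝ) j
          + Q t j i * ((deriv e t : EuclideanSpace ℝ (Fin 3))) j))) t := by
      rw [hetF]
      exact ((EuclideanSpace.equiv (Fin 3) ℝ).symm.hasFDerivAt).comp_hasDerivAt t hFd
    rw [hetd.deriv]
    apply ce
    funext i
    show _ = ((matDeriv Q t)ᵀ *ᵥ _) i + ((Q t)ᵀ *ᵥ _) i
    simp [Matrix.mulVec, dotProduct, Matrix.transpose_apply, Finset.sum_add_distrib]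
  -- pointwise equality of integrands
  have hpt : ∀ t : ℝ, ‖deriv et t - (1 / 2 : ℝ) • cross3 (ωt t) (et t)‖
      = ‖deriv e t - (1 / 2 : ℝ) • cross3 (ωbar t) (e t)‖ := by
    intro t
    have hmain : deriv et t - (1 / 2 : ℝ) • cross3 (ωt t) (et t)
        = Matrix.toEuclideanLin (Q t)ᵀ
            (deriv e t - (1 / 2 : ℝ) • cross3 (ωbar t) (e t)) := by
      have hq : (1 / 2 : ℝ) • crossProduct (toFn (qdot t)) (toFn (e t))
          = (matDeriv Q t * (Q t)ᵀ) *ᵥ toFn (e t) := congrArg WithLp.ofLp (hqdot t (e t))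
      have hskew : (matDeriv Q t)ᵀ = -((Q t)ᵀ * matDeriv Q t * (Q t)ᵀ) := by
        have h0 := matDeriv_skew Q hQdiff hQ t
        have h1 : (matDeriv Q t)ᵀ * Q t = -((Q t)ᵀ * matDeriv Q t) := by
          rw [eq_neg_iff_add_eq_zero]; exact h0
        calc (matDeriv Q t)ᵀ = (matDeriv Q t)ᵀ * (Q t * (Q t)ᵀ) := by rw [hQQT t, mul_one]
          _ = ((matDeriv Q t)ᵀ * Q t) * (Q t)ᵀ := by rw [mul_assoc]
          _ = -((Q t)ᵀ * matDeriv Q t) * (Q t)ᵀ := by rw [h1]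
          _ = -((Q t)ᵀ * matDeriv Q t * (Q t)ᵀ) := by rw [neg_mul]
      have hAT : ((Q t)ᵀ)ᵀ * (Q t)ᵀ = 1 := by
        rw [Matrix.transpose_transpose]; exact hQQT t
      have hATdet : ((Q t)ᵀ).det = 1 := by rw [Matrix.det_transpose]; exact hdet t
      rw [hderiv t, het t, hωt t]
      apply ce
      show ((matDeriv Q t)ᵀ *ᵥ toFn (e t) + (Q t)ᵀ *ᵥ toFn (deriv e t))
            - (1 / 2 : ℝ) • crossProduct
                ((Q t)ᵀ *ᵥ (toFn (ωbar t) - toFn (qdot t)))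
                ((Q t)ᵀ *ᵥ toFn (e t))
          = (Q t)ᵀ *ᵥ (toFn (deriv e t)
            - (1 / 2 : ℝ) • crossProduct (toFn (ωbar t)) (toFn (e t)))
      rw [← cross_rot (Q t)ᵀ hAT hATdet]
      have hsub : crossProduct (toFn (ωbar t) - toFn (qdot t)) (toFn (e t))
          = crossProduct (toFn (ωbar t)) (toFn (e t))
            - crossProduct (toFn (qdot t)) (toFn (e t)) := by
        rw [map_sub]; rfl
      have hq' : (1 / 2 : ℝ) • crossProduct (toFn (qdot t)) (toFn (e t))
          = (matDeriv Q t) *ᵥ ((Q t)ᵀ *ᵥ toFn (e t)) := by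
        rw [Matrix.mulVec_mulVec]; exact hq
      have hAdT : (matDeriv Q t)ᵀ *ᵥ toFn (e t)
          = -((Q t)ᵀ *ᵥ (matDeriv Q t *ᵥ ((Q t)ᵀ *ᵥ toFn (e t)))) := by
        rw [hskew, Matrix.neg_mulVec, Matrix.mulVec_mulVec, Matrix.mulVec_mulVec]
      rw [hsub, Matrix.mulVec_sub, smul_sub, Matrix.mulVec_sub,
        ← Matrix.mulVec_smul _ _ (crossProduct (toFn (qdot t)) (toFn (e t))), hq',
        hAdT, Matrix.mulVec_smul]
      abel
    rw [hmain, norm_pres _ (by rw [Matrix.transpose_transpose]; exact hQQT t)]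
  congr 1
  apply intervalIntegral.integral_congr
  intro t _
  exact hpt t
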